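/- With S = K[∂₁,…,∂_d] and points ℓ_j ∈ ℙ^{d−1} with homogeneous prime ideals P_j, the degree-r polynomial solutions of the system I_u = ⟨ℓ₁^{u₁+1},…,ℓ_n^{u_n+1}⟩ (as constant-coefficient PDEs acting on K[z₁,…,z_d]) are exactly the degree-r homogeneous polynomials lying in P₁^{r−u₁} ∩ ⋯ ∩ P_n^{r−u_n}, where P_j^{m} = S for m ≤ 0. -/

import Mathlib

open MvPolynomial Finsupp

namespace Stmt3Aux

variable {K : Type*} [Field K] [CharZero K] {d : ℕ}

lemma coeff_pderiv (i : Fin d) (p : MvPolynomial (Fin d) K) (μ : Fin d →₀ ℕ) :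
    coeff μ (pderiv i p) = ((μ i + 1 : ℕ) : K) * coeff (μ + Finsupp.single i 1) p := by
  induction p using MvPolynomial.induction_on' with
  | monomial s a =>
    rw [pderiv_monomial, coeff_monomial, coeff_monomial]
    by_cases h : μ + Finsupp.single i 1 = s
    · have hsi : s i = μ i + 1 := by rw [← h]; simp
      have h2 : s - Finsupp.single i 1 = μ := by
        rw [← h]; exact add_tsub_cancel_right _ _
      rw [if_pos h2, if_pos h.symm, hsi]; push_cast; ring
    · rw [if_neg (fun hs : s = μ + Finsupp.single i 1 => h hs.symm), mul_zero]
      by_cases h2 : s - Finsupp.single i 1 = μ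
      · rw [if_pos h2]
        rcases Nat.eq_zero_or_pos (s i) with hs | hs
        · simp [hs]
        · exfalso
          apply h
          rw [← h2, tsub_add_cancel_of_le]
          rwa [Finsupp.single_le_iff]
      · rw [if_neg h2]
  | add p q hp hq => simp [hp, hq, mul_add]

lemma coeff_pderiv_iterate (i : Fin d) (s : ℕ) (p : MvPolynomial (Fin d) K) (μ : Fin d →₀ ℕ) :
    coeff μ ((pderiv i)^[s] p) =
      (((μ i + s).descFactorial s : ℕ) : K) * coeff (μ + Finsupp.single i s) p := by
  induction s generalizing p with
  | zero => simp
  | succ t ih =>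
    rw [Function.iterate_succ_apply, ih, coeff_pderiv]
    have h1 : μ + Finsupp.single i t + Finsupp.single i 1 = μ + Finsupp.single i (t + 1) := by
      rw [add_assoc, ← Finsupp.single_add]
    have h2 : (μ + Finsupp.single i t) i = μ i + t := by simp
    rw [h1, h2]
    rw [show μ i + (t + 1) = (μ i + t) + 1 from rfl, Nat.succ_descFactorial_succ]
    push_cast
    ring

lemma pderiv_iterate_eq_zero_iff (i : Fin d) (s : ℕ) (p : MvPolynomial (Fin d) K) :
    (pderiv i)^[s] p = 0 ↔ ∀ m ∈ p.support, m i < s := by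
  constructor
  · intro h m hm
    by_contra hc
    push_neg at hc
    have hcoeff := congrArg (coeff (m - Finsupp.single i s)) h
    rw [coeff_pderiv_iterate, coeff_zero] at hcoeff
    have hadd : m - Finsupp.single i s + Finsupp.single i s = m :=
      tsub_add_cancel_of_le (by rwa [Finsupp.single_le_iff])
    rw [hadd] at hcoeff
    rcases mul_eq_zero.mp hcoeff with h1 | h1
    · have h2 : ((m - Finsupp.single i s) i + s).descFactorial s ≠ 0 := by
        rw [Ne, Nat.descFactorial_eq_zero_iff_lt]
        omega
      exact h2 (Nat.cast_eq_zero.mp h1)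
    · exact (MvPolynomial.mem_support_iff.mp hm) h1
  · intro h
    ext μ
    rw [coeff_pderiv_iterate, coeff_zero]
    have : coeff (μ + Finsupp.single i s) p = 0 := by
      rw [← MvPolynomial.notMem_support_iff]
      intro hmem
      have := h _ hmem
      simp only [Finsupp.add_apply, Finsupp.single_eq_same] at this
      omega
    rw [this, mul_zero]


section IdealPart

variable (K)

/-- degree away from `i0` -/
def wdeg (i0 : Fin d) (m : Fin d →₀ ℕ) : ℕ := ∑ k ∈ Finset.univ.erase i0, m k


lemma wdeg_add (i0 : Fin d) (m m' : Fin d →₀ ℕ) :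
    wdeg i0 (m + m') = wdeg i0 m + wdeg i0 m' := by
  simp [wdeg, Finset.sum_add_distrib]

/-- the ideal of polynomials all of whose monomials have degree at least `t` in the
variables other than `i0` -/
def Jid (i0 : Fin d) (t : ℕ) : Ideal (MvPolynomial (Fin d) K) where
  carrier := {p | ∀ m ∈ p.support, t ≤ wdeg i0 m}
  zero_mem' := by simp
  add_mem' := by
    intro p q hp hq m hm
    rcases Finset.mem_union.mp (MvPolynomial.support_add hm) with h | h
    · exact hp m h
    · exact hq m h
  smul_mem' := by
    intro c p hp m hm
    rw [smul_eq_mul] at hm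
    have := MvPolynomial.support_mul c p hm
    rw [Finset.mem_add] at this
    obtain ⟨m1, hm1, m2, hm2, rfl⟩ := this
    rw [wdeg_add]
    exact le_add_of_le_right (hp m2 hm2)

lemma mem_Jid {i0 : Fin d} {t : ℕ} {p : MvPolynomial (Fin d) K} :
    p ∈ Jid K i0 t ↔ ∀ m ∈ p.support, t ≤ wdeg i0 m := Iff.rfl

/-- the ideal generated by the variables other than `i0` -/
noncomputable def Qid (i0 : Fin d) : Ideal (MvPolynomial (Fin d) K) :=
  Ideal.span {p | ∃ k, k ≠ i0 ∧ p = MvPolynomial.X k}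

lemma Qid_le_Jid (i0 : Fin d) : Qid K i0 ≤ Jid K i0 1 := by
  rw [Qid, Ideal.span_le]
  rintro p ⟨k, hk, rfl⟩
  intro m hm
  rw [MvPolynomial.support_X] at hm
  rw [Finset.mem_singleton] at hm
  subst hm
  rw [wdeg]
  rw [Finset.sum_eq_single k]
  · simp
  · intro b _ hbk
    exact Finsupp.single_eq_of_ne hbk
  · intro hk2
    exact absurd (Finset.mem_erase.mpr ⟨hk, Finset.mem_univ k⟩) hk2

lemma Qid_pow_le_Jid (i0 : Fin d) (t : ℕ) : (Qid K i0) ^ t ≤ Jid K i0 t := by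
  induction t with
  | zero =>
    intro p _ m hm
    exact Nat.zero_le _
  | succ t ih =>
    rw [pow_succ]
    rw [Ideal.mul_le]
    intro r hr s hs m hm
    have := MvPolynomial.support_mul r s hm
    rw [Finset.mem_add] at this
    obtain ⟨m1, hm1, m2, hm2, rfl⟩ := this
    rw [wdeg_add]
    exact add_le_add (ih hr m1 hm1) (Qid_le_Jid K i0 hs m2 hm2)

lemma monomial_mem_Qid_pow {i0 : Fin d} (t : ℕ) (m : Fin d →₀ ℕ) (c : K)
    (h : t ≤ wdeg i0 m) : MvPolynomial.monomial m c ∈ (Qid K i0) ^ t := by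
  induction t generalizing m with
  | zero => simp
  | succ t ih =>
    have hex : ∃ k ∈ Finset.univ.erase i0, m k ≠ 0 := by
      by_contra hc
      push_neg at hc
      have : wdeg i0 m = 0 := Finset.sum_eq_zero hc
      omega
    obtain ⟨k, hk, hmk⟩ := hex
    have hle : Finsupp.single k 1 ≤ m := by
      rw [Finsupp.single_le_iff]; omega
    have hsplit : MvPolynomial.monomial m c =
        MvPolynomial.X k * MvPolynomial.monomial (m - Finsupp.single k 1) c := by
      rw [MvPolynomial.X, MvPolynomial.monomial_mul, one_mul,
        add_tsub_cancel_of_le hle]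
    have hw : t ≤ wdeg i0 (m - Finsupp.single k 1) := by
      have : wdeg i0 m = wdeg i0 (Finsupp.single k 1) + wdeg i0 (m - Finsupp.single k 1) := by
        rw [← wdeg_add, add_tsub_cancel_of_le hle]
      have hw1 : wdeg i0 (Finsupp.single k 1) = 1 := by
        rw [wdeg, Finset.sum_eq_single k]
        · simp
        · intro b _ hbk
          exact Finsupp.single_eq_of_ne hbk
        · intro hk2
          exact absurd hk hk2
      omega
    have hX : (MvPolynomial.X k : MvPolynomial (Fin d) K) ∈ Qid K i0 :=
      Ideal.subset_span ⟨k, (Finset.mem_erase.mp hk).1, rfl⟩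
    rw [hsplit, pow_succ']
    exact Ideal.mul_mem_mul hX (ih _ hw)

lemma Jid_le_Qid_pow (i0 : Fin d) (t : ℕ) : Jid K i0 t ≤ (Qid K i0) ^ t := by
  intro p hp
  rw [p.as_sum]
  apply Ideal.sum_mem
  intro m hm
  exact monomial_mem_Qid_pow K t m _ (hp m hm)

lemma mem_Qid_pow_iff (i0 : Fin d) (t : ℕ) (p : MvPolynomial (Fin d) K) :
    p ∈ (Qid K i0) ^ t ↔ ∀ m ∈ p.support, t ≤ wdeg i0 m :=
  ⟨fun h => Qid_pow_le_Jid K i0 t h, fun h => Jid_le_Qid_pow K i0 t (mem_Jid K |>.mpr h)⟩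

end IdealPart


section Subst

variable {K : Type*} [Field K] [CharZero K] {d : ℕ}

open MvPolynomial

noncomputable def subL (a : Fin d → K) (i0 : Fin d) : Fin d → MvPolynomial (Fin d) K :=
  fun k => if k = i0 then C (a i0)⁻¹ * X i0 else X k - C (a k) * C ((a i0)⁻¹) * X i0

noncomputable def subM (a : Fin d → K) (i0 : Fin d) : Fin d → MvPolynomial (Fin d) K :=
  fun k => if k = i0 then C (a i0) * X i0 else X k + C (a k) * X i0

lemma subL_self (a : Fin d → K) (i0 : Fin d) : subL a i0 i0 = C (a i0)⁻¹ * X i0 := by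
  simp [subL]

lemma subL_ne (a : Fin d → K) {i0 k : Fin d} (hk : k ≠ i0) :
    subL a i0 k = X k - C (a k) * C ((a i0)⁻¹) * X i0 := by
  simp [subL, hk]

lemma subM_self (a : Fin d → K) (i0 : Fin d) : subM a i0 i0 = C (a i0) * X i0 := by
  simp [subM]

lemma subM_ne (a : Fin d → K) {i0 k : Fin d} (hk : k ≠ i0) :
    subM a i0 k = X k + C (a k) * X i0 := by
  simp [subM, hk]

lemma aeval_subL_subM {a : Fin d → K} {i0 : Fin d} (ha : a i0 ≠ 0) (k : Fin d) :
    aeval (subL a i0) (subM a i0 k) = X k := by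
  have hC : (C (a i0) * C ((a i0)⁻¹) : MvPolynomial (Fin d) K) = 1 := by
    rw [← C_mul, mul_inv_cancel₀ ha, C_1]
  by_cases hk : k = i0
  · subst hk
    rw [subM_self, map_mul, aeval_X, aeval_C, subL_self, algebraMap_eq]
    linear_combination (X k : MvPolynomial (Fin d) K) * hC
  · rw [subM_ne a hk, map_add, map_mul, aeval_X, aeval_X, aeval_C, subL_ne a hk,
      subL_self, algebraMap_eq]
    ring

lemma aeval_subM_subL {a : Fin d → K} {i0 : Fin d} (ha : a i0 ≠ 0) (k : Fin d) :
    aeval (subM a i0) (subL a i0 k) = X k := by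
  have hC : (C (a i0) * C ((a i0)⁻¹) : MvPolynomial (Fin d) K) = 1 := by
    rw [← C_mul, mul_inv_cancel₀ ha, C_1]
  by_cases hk : k = i0
  · subst hk
    rw [subL_self, map_mul, aeval_X, aeval_C, subM_self, algebraMap_eq]
    linear_combination (X k : MvPolynomial (Fin d) K) * hC
  · rw [subL_ne a hk, map_sub, map_mul, map_mul, aeval_X, aeval_X, aeval_C, aeval_C,
      subM_ne a hk, subM_self, algebraMap_eq]
    linear_combination (- (C (a k)) * X i0 : MvPolynomial (Fin d) K) * hC

noncomputable def ψeq (a : Fin d → K) (i0 : Fin d) (ha : a i0 ≠ 0) :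
    MvPolynomial (Fin d) K ≃ₐ[K] MvPolynomial (Fin d) K :=
  AlgEquiv.ofAlgHom (aeval (subL a i0)) (aeval (subM a i0))
    (by
      apply MvPolynomial.algHom_ext
      intro k
      simp only [AlgHom.comp_apply, aeval_X, AlgHom.id_apply]
      exact aeval_subL_subM ha k)
    (by
      apply MvPolynomial.algHom_ext
      intro k
      simp only [AlgHom.comp_apply, aeval_X, AlgHom.id_apply]
      exact aeval_subM_subL ha k)

lemma ψeq_apply (a : Fin d → K) (i0 : Fin d) (ha : a i0 ≠ 0) (p : MvPolynomial (Fin d) K) :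
    ψeq a i0 ha p = aeval (subL a i0) p := rfl

lemma ψeq_symm_apply (a : Fin d → K) (i0 : Fin d) (ha : a i0 ≠ 0) (p : MvPolynomial (Fin d) K) :
    (ψeq a i0 ha).symm p = aeval (subM a i0) p := rfl

/-- the first-order operator `∑ aᵢ ∂ᵢ` as a plain function -/
noncomputable def lop (a : Fin d → K) (p : MvPolynomial (Fin d) K) : MvPolynomial (Fin d) K :=
  ∑ i, a i • pderiv i p

lemma lop_add (a : Fin d → K) (p q : MvPolynomial (Fin d) K) :
    lop a (p + q) = lop a p + lop a q := by
  simp [lop, map_add, smul_add, Finset.sum_add_distrib]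

lemma lop_sub (a : Fin d → K) (p q : MvPolynomial (Fin d) K) :
    lop a (p - q) = lop a p - lop a q := by
  simp [lop, map_sub, smul_sub, Finset.sum_sub_distrib]

lemma lop_C (a : Fin d → K) (c : K) : lop a (C c) = 0 := by
  simp [lop]

lemma lop_X (a : Fin d → K) (k : Fin d) : lop a (X k) = C (a k) := by
  classical
  rw [lop, Finset.sum_eq_single k]
  · rw [pderiv_X_self, smul_eq_C_mul, mul_one]
  · intro b _ hbk
    rw [pderiv_X_of_ne (Ne.symm hbk), smul_zero]
  · intro h; exact absurd (Finset.mem_univ k) h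

lemma lop_mul (a : Fin d → K) (p q : MvPolynomial (Fin d) K) :
    lop a (p * q) = lop a p * q + p * lop a q := by
  simp only [lop, pderiv_mul, smul_add, Finset.sum_add_distrib]
  rw [Finset.sum_mul, Finset.mul_sum]
  congr 1
  · exact Finset.sum_congr rfl fun i _ => (smul_mul_assoc _ _ _).symm
  · exact Finset.sum_congr rfl fun i _ => (mul_smul_comm _ _ _).symm

lemma lop_subL {a : Fin d → K} {i0 : Fin d} (ha : a i0 ≠ 0) (k : Fin d) :
    lop a (subL a i0 k) = if k = i0 then 1 else 0 := by
  have hC : (C (a i0) * C ((a i0)⁻¹) : MvPolynomial (Fin d) K) = 1 := by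
    rw [← C_mul, mul_inv_cancel₀ ha, C_1]
  by_cases hk : k = i0
  · subst hk
    rw [if_pos rfl, subL_self, lop_mul, lop_C, lop_X, zero_mul, zero_add, ← C_mul,
      inv_mul_cancel₀ ha, C_1]
  · rw [if_neg hk, subL_ne a hk, lop_sub, lop_X, lop_mul, lop_mul, lop_C, lop_C, lop_X]
    linear_combination (- (C (a k)) : MvPolynomial (Fin d) K) * hC

lemma lop_aeval_subL {a : Fin d → K} {i0 : Fin d} (ha : a i0 ≠ 0) (p : MvPolynomial (Fin d) K) :
    lop a (aeval (subL a i0) p) = aeval (subL a i0) (pderiv i0 p) := by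
  induction p using MvPolynomial.induction_on with
  | C c => rw [aeval_C, pderiv_C, map_zero, algebraMap_eq, lop_C]
  | add p q hp hq => rw [map_add, lop_add, hp, hq, map_add, map_add]
  | mul_X p i hp =>
    rw [map_mul, aeval_X, lop_mul, hp, lop_subL ha]
    rw [pderiv_mul, map_add, map_mul, map_mul, aeval_X]
    by_cases hi : i = i0
    · subst hi
      rw [if_pos rfl, pderiv_X_self]
      simp
    · rw [if_neg hi, pderiv_X_of_ne hi]
      simp [hi]

lemma lop_iter_aeval_subL {a : Fin d → K} {i0 : Fin d} (ha : a i0 ≠ 0) (s : ℕ)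
    (p : MvPolynomial (Fin d) K) :
    (lop a)^[s] (aeval (subL a i0) p) = aeval (subL a i0) ((pderiv i0)^[s] p) := by
  induction s generalizing p with
  | zero => rfl
  | succ t ih =>
    rw [Function.iterate_succ_apply', Function.iterate_succ_apply', ih, lop_aeval_subL ha]

lemma subL_isHomogeneous (a : Fin d → K) (i0 : Fin d) (k : Fin d) :
    (subL a i0 k).IsHomogeneous 1 := by
  rw [subL]
  by_cases hk : k = i0
  · rw [if_pos hk]; exact isHomogeneous_C_mul_X _ _
  · rw [if_neg hk, ← C_mul]; exact (isHomogeneous_X _ _).sub (isHomogeneous_C_mul_X _ _)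

lemma subM_isHomogeneous (a : Fin d → K) (i0 : Fin d) (k : Fin d) :
    (subM a i0 k).IsHomogeneous 1 := by
  rw [subM]
  by_cases hk : k = i0
  · rw [if_pos hk]; exact isHomogeneous_C_mul_X _ _
  · rw [if_neg hk]; exact (isHomogeneous_X _ _).add (isHomogeneous_C_mul_X _ _)

lemma map_Qid {a : Fin d → K} {i0 : Fin d} (ha : a i0 ≠ 0) :
    Ideal.map ((ψeq a i0 ha).toRingEquiv) (Qid K i0)
      = Ideal.span {f | ∃ i i' : Fin d, f = C (a i') * X i - C (a i) * X i'} := by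
  have hC : (C (a i0) * C ((a i0)⁻¹) : MvPolynomial (Fin d) K) = 1 := by
    rw [← C_mul, mul_inv_cancel₀ ha, C_1]
  rw [Qid, Ideal.map_span]
  apply le_antisymm
  · rw [Ideal.span_le]
    rintro _ ⟨p, ⟨k, hk, rfl⟩, rfl⟩
    have hψX : (ψeq a i0 ha).toRingEquiv (X k) = X k - C (a k) * C ((a i0)⁻¹) * X i0 := by
      show aeval (subL a i0) (X k) = _
      rw [aeval_X, subL_ne a hk]
    rw [hψX]
    have hkey : (X k - C (a k) * C ((a i0)⁻¹) * X i0 : MvPolynomial (Fin d) K)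
        = C ((a i0)⁻¹) * (C (a i0) * X k - C (a k) * X i0) := by
      linear_combination (- (X k) : MvPolynomial (Fin d) K) * hC
    rw [hkey]
    exact Ideal.mul_mem_left _ _ (Ideal.subset_span ⟨k, i0, rfl⟩)
  · rw [Ideal.span_le]
    rintro _ ⟨i, i', rfl⟩
    set T : Ideal (MvPolynomial (Fin d) K) :=
      Ideal.span ((ψeq a i0 ha).toRingEquiv '' {p | ∃ k, k ≠ i0 ∧ p = X k}) with hT
    have hM : ∀ k, (C (a i0) * X k - C (a k) * X i0 : MvPolynomial (Fin d) K) ∈ T := by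
      intro k
      by_cases hk : k = i0
      · rw [hk, sub_self]
        exact T.zero_mem
      · have h1 : (C (a i0) * X k - C (a k) * X i0 : MvPolynomial (Fin d) K)
            = C (a i0) * (X k - C (a k) * C ((a i0)⁻¹) * X i0) := by
          linear_combination (C (a k) * X i0 : MvPolynomial (Fin d) K) * hC
        have h2 : (X k - C (a k) * C ((a i0)⁻¹) * X i0 : MvPolynomial (Fin d) K) ∈ T := by
          apply Ideal.subset_span
          refine ⟨X k, ⟨k, hk, rfl⟩, ?_⟩
          show aeval (subL a i0) (X k) = _
          rw [aeval_X, subL_ne a hk]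
        rw [h1]
        exact Ideal.mul_mem_left _ _ h2
    have hkey : (C (a i') * X i - C (a i) * X i' : MvPolynomial (Fin d) K)
        = C ((a i0)⁻¹) * (C (a i') * (C (a i0) * X i - C (a i) * X i0)
            - C (a i) * (C (a i0) * X i' - C (a i') * X i0)) := by
      linear_combination (C (a i) * X i' - C (a i') * X i : MvPolynomial (Fin d) K) * hC
    rw [hkey]
    exact Ideal.mul_mem_left _ _ (T.sub_mem (Ideal.mul_mem_left _ _ (hM i))
      (Ideal.mul_mem_left _ _ (hM i')))

end Subst

end Stmt3Aux


open MvPolynomial in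
theorem stmt3 (K : Type*) [Field K] [CharZero K] (d n : ℕ)
    (A : Matrix (Fin d) (Fin n) K)
    (hnz : ∀ j, ∃ i, A i j ≠ 0)
    (r : ℕ) (u : Fin n → ℕ)
    -- differential operators ℓⱼ = Σᵢ a_{ij} ∂ᵢ
    (D : Fin n → Module.End K (MvPolynomial (Fin d) K))
    (hD : ∀ j, D j = ∑ i : Fin d, A i j • (MvPolynomial.pderiv i).toLinearMap)
    -- Pⱼ : the homogeneous prime ideal of the point (a_{1j} : … : a_{dj}) ∈ ℙ^{d-1},
    -- generated by the 2×2 minors a_{i'j} z_i − a_{ij} z_{i'}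
    (P : Fin n → Ideal (MvPolynomial (Fin d) K))
    (hP : ∀ j, P j = Ideal.span
      {f | ∃ i i' : Fin d,
        f = MvPolynomial.C (A i' j) * MvPolynomial.X i - MvPolynomial.C (A i j) * MvPolynomial.X i'})
    (f : MvPolynomial (Fin d) K)
    (hf : f ∈ MvPolynomial.homogeneousSubmodule (Fin d) K r) :
    (∀ j, ((D j) ^ (u j + 1)) f = 0) ↔ (∀ j, f ∈ (P j) ^ (r - u j)) := by
  rw [MvPolynomial.mem_homogeneousSubmodule] at hf
  refine forall_congr' fun j => ?_
  obtain ⟨i0, ha⟩ := hnz j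
  set a : Fin d → K := fun i => A i j with haa
  have ha' : a i0 ≠ 0 := ha
  set ψ := Stmt3Aux.ψeq a i0 ha' with hψ
  set g : MvPolynomial (Fin d) K := MvPolynomial.aeval (Stmt3Aux.subM a i0) f with hgdef
  have hfg : MvPolynomial.aeval (Stmt3Aux.subL a i0) g = f := by
    have h := ψ.apply_symm_apply f
    rwa [hψ, Stmt3Aux.ψeq_symm_apply, Stmt3Aux.ψeq_apply] at h
  have hg_hom : g.IsHomogeneous r := by
    have h := hf.aeval (Stmt3Aux.subM a i0) (fun k => Stmt3Aux.subM_isHomogeneous a i0 k)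
    simpa only [one_mul] using h
  -- rewrite the PDE side
  have hDfun : ⇑(D j) = Stmt3Aux.lop a := by
    funext p
    rw [hD j]
    simp [Stmt3Aux.lop, LinearMap.sum_apply, LinearMap.smul_apply]
    rfl
  have hDpow : ((D j) ^ (u j + 1)) f = (Stmt3Aux.lop a)^[u j + 1] f := by
    rw [Module.End.pow_apply, hDfun]
  -- support description of g
  have hsupp : ∀ m ∈ g.support, Stmt3Aux.wdeg i0 m + m i0 = r := by
    intro m hm
    have hcoeff : MvPolynomial.coeff m g ≠ 0 := MvPolynomial.mem_support_iff.mp hm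
    have hdeg := hg_hom hcoeff
    have hsum : ∑ k, m k = r := by
      have h1 : (Finsupp.weight 1) m = ∑ k ∈ m.support, m k := by
        rw [Finsupp.weight_apply, Finsupp.sum]
        simp
      have h2 : ∑ k, m k = ∑ k ∈ m.support, m k :=
        (Finset.sum_subset (Finset.subset_univ _)
          (fun x _ hx => Finsupp.notMem_support_iff.mp hx)).symm
      rw [h2, ← h1, hdeg]
    rw [← hsum, Stmt3Aux.wdeg]
    exact Finset.sum_erase_add _ _ (Finset.mem_univ i0)
  have hψg : ψ.toRingEquiv g = f := hfg
  constructor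
  · intro h0
    rw [hDpow, ← hfg, Stmt3Aux.lop_iter_aeval_subL ha'] at h0
    have hpd : (⇑(MvPolynomial.pderiv i0))^[u j + 1] g = 0 := by
      have hinj : Function.Injective (MvPolynomial.aeval (Stmt3Aux.subL a i0) :
          MvPolynomial (Fin d) K → MvPolynomial (Fin d) K) := by
        intro x y hxy
        have : ψ x = ψ y := hxy
        exact ψ.injective this
      apply hinj
      rw [h0, map_zero]
    have hQ : g ∈ (Stmt3Aux.Qid K i0) ^ (r - u j) := by
      rw [Stmt3Aux.mem_Qid_pow_iff]
      intro m hm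
      have h1 := (Stmt3Aux.pderiv_iterate_eq_zero_iff i0 (u j + 1) g).mp hpd m hm
      have h2 := hsupp m hm
      omega
    have hmap : Ideal.map (ψ.toRingEquiv) ((Stmt3Aux.Qid K i0) ^ (r - u j))
        = (P j) ^ (r - u j) := by
      rw [Ideal.map_pow, Stmt3Aux.map_Qid ha']
      congr 1
      exact (hP j).symm
    rw [← hmap, ← hψg]
    exact Ideal.apply_mem_of_equiv_iff.mpr hQ
  · intro h0
    have hmap : Ideal.map (ψ.toRingEquiv) ((Stmt3Aux.Qid K i0) ^ (r - u j))
        = (P j) ^ (r - u j) := by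
      rw [Ideal.map_pow, Stmt3Aux.map_Qid ha']
      congr 1
      exact (hP j).symm
    have hQ : g ∈ (Stmt3Aux.Qid K i0) ^ (r - u j) :=
      Ideal.apply_mem_of_equiv_iff.mp (by rw [hψg, hmap]; exact h0)
    have hpd : (⇑(MvPolynomial.pderiv i0))^[u j + 1] g = 0 := by
      rw [Stmt3Aux.pderiv_iterate_eq_zero_iff]
      intro m hm
      have h1 := (Stmt3Aux.mem_Qid_pow_iff K i0 (r - u j) g).mp hQ m hm
      have h2 := hsupp m hm
      omega
    rw [hDpow, ← hfg, Stmt3Aux.lop_iter_aeval_subL ha', hpd, map_zero]
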